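/- Let A ∈ ℝ^{n×n}, B ∈ ℝ^{n×m}, let Λ ∈ ℝ^{(n+m)×(n+m)} be symmetric positive semidefinite, let S ∈ ℝ^{(n+m)×(n+m)} be symmetric positive definite, and set H := S·Tᵀ where T := [A B] ∈ ℝ^{n×(n+m)}. Suppose G ∈ ℝ^{n×n}, symmetric P ∈ ℝ^{(n+m)×(n+m)}, and X ∈ ℝ^{n×m} satisfy that the block matrix [[−S·P·S + I, [G X]ᵀ], [[G X], Hᵀ·P·H − G − Gᵀ]] is negative definite. Then G is invertible, F := Xᵀ·(Gᵀ)⁻¹ satisfies ρ(A + B·F) < 1, the series 𝒥(F) := Σ_{k=0}^{∞} trace(Λ·A_F^k·(A_Fᵀ)^k) converges, and 𝒥(F) ≤ trace(Λ·S·P·S), where A_F := [[A, B], [F·A, F·B]]. -/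

import Mathlib

set_option linter.unusedSectionVars false


open Matrix

/-- The spectral radius of a real square matrix: the supremum of the moduli of the
elements of the spectrum of the matrix regarded as a complex matrix. -/
noncomputable def specRad {N : Type*} [Fintype N] [DecidableEq N] (M : Matrix N N ℝ) : ℝ :=
  sSup ((fun z => ‖z‖) '' spectrum ℂ (M.map Complex.ofReal))


section AuxLQR

variable {N : Type*} [Fintype N]

private lemma star_pi_eq (x : N → ℝ) : star x = x := funext fun _ => star_trivial _

private lemma psd_dot {M : Matrix N N ℝ} (hM : M.PosSemidef) (x : N → ℝ) :
    0 ≤ x ⬝ᵥ (M *ᵥ x) := by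
  have := hM.dotProduct_mulVec_nonneg x; rwa [star_pi_eq] at this

private lemma pd_dot {M : Matrix N N ℝ} (hM : M.PosDef) {x : N → ℝ} (hx : x ≠ 0) :
    0 < x ⬝ᵥ (M *ᵥ x) := by
  have := hM.dotProduct_mulVec_pos hx; rwa [star_pi_eq] at this

private lemma real_herm {M : Matrix N N ℝ} (h : Mᵀ = M) : M.IsHermitian := by
  rwa [Matrix.IsHermitian, conjTranspose_eq_transpose_of_trivial]

private lemma real_posdef {M : Matrix N N ℝ} (h : Mᵀ = M)
    (h2 : ∀ x : N → ℝ, x ≠ 0 → 0 < x ⬝ᵥ (M *ᵥ x)) : M.PosDef := by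
  refine .of_dotProduct_mulVec_pos (real_herm h) (fun x hx => ?_)
  rw [star_pi_eq]; exact h2 x hx

private lemma re_quad (K : Matrix N N ℝ) (v : N → ℂ) :
    (star v ⬝ᵥ (K.map Complex.ofReal *ᵥ v)).re
      = (fun i => (v i).re) ⬝ᵥ (K *ᵥ fun i => (v i).re)
        + (fun i => (v i).im) ⬝ᵥ (K *ᵥ fun i => (v i).im) := by
  classical
  simp only [dotProduct, mulVec, Pi.star_apply, Matrix.map_apply, Finset.mul_sum,
    Complex.re_sum, ← Finset.sum_add_distrib]
  refine Finset.sum_congr rfl fun i _ => ?_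
  refine Finset.sum_congr rfl fun j _ => ?_
  simp only [Complex.mul_re, Complex.ofReal_re, Complex.ofReal_im, RCLike.star_def,
    Complex.conj_re, Complex.conj_im]
  ring_nf
  simp [Complex.mul_im, Complex.mul_re]
  ring

private lemma psd_cre {M : Matrix N N ℝ} (hM : M.PosSemidef) (v : N → ℂ) :
    0 ≤ (star v ⬝ᵥ (M.map Complex.ofReal *ᵥ v)).re := by
  rw [re_quad]; exact add_nonneg (psd_dot hM _) (psd_dot hM _)

private lemma cmap_ct {M' : Type*} (K : Matrix N M' ℝ) :
    (K.map Complex.ofReal)ᴴ = Kᵀ.map Complex.ofReal := by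
  ext i j
  simp [Matrix.conjTranspose_apply, Complex.conj_ofReal]

private lemma cmap_mul {M' L' : Type*} [Fintype M'] (K : Matrix N M' ℝ) (E : Matrix M' L' ℝ) :
    (K * E).map Complex.ofReal = K.map Complex.ofReal * E.map Complex.ofReal := by
  ext i j
  simp [Matrix.mul_apply]

private lemma cmap_sub (K E : Matrix N N ℝ) :
    (K - E).map Complex.ofReal = K.map Complex.ofReal - E.map Complex.ofReal := by
  ext i j; simp

private lemma dot_shift {K' : Type*} [Fintype K'] (E : Matrix N K' ℝ) (v : N → ℂ) (y : K' → ℂ) :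
    star v ⬝ᵥ ((E.map Complex.ofReal) *ᵥ y)
      = star ((Eᵀ.map Complex.ofReal) *ᵥ v) ⬝ᵥ y := by
  rw [Matrix.dotProduct_mulVec]
  congr 1
  have h := Matrix.star_mulVec (M := (E.map Complex.ofReal)ᴴ) (v := v)
  rw [Matrix.conjTranspose_conjTranspose] at h
  rw [← h, cmap_ct]

private lemma dot_self_zero {u : N → ℂ} (h : (star u ⬝ᵥ u).re = 0) : u = 0 := by
  classical
  have hre : (star u ⬝ᵥ u).re = ∑ i, Complex.normSq (u i) := by
    simp only [dotProduct, Complex.re_sum, Pi.star_apply]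
    refine Finset.sum_congr rfl fun i _ => ?_
    simp [Complex.normSq_apply, Complex.mul_re, RCLike.star_def]
  rw [hre] at h
  have := (Finset.sum_eq_zero_iff_of_nonneg
    (fun i _ => Complex.normSq_nonneg (u i))).mp h
  funext i
  exact Complex.normSq_eq_zero.mp (this i (Finset.mem_univ i))

end AuxLQR

section SpecLQR

variable {N : Type*} [Fintype N] [DecidableEq N]

private lemma psd_dot' {M : Matrix N N ℝ} (hM : M.PosSemidef) (x : N → ℝ) :
    0 ≤ x ⬝ᵥ (M *ᵥ x) := by
  have := hM.dotProduct_mulVec_nonneg x; rwa [show star x = x from funext fun _ => star_trivial _] at this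

private lemma eig_vec {M : Matrix N N ℝ} {z : ℂ}
    (hz : z ∈ spectrum ℂ (M.map Complex.ofReal)) :
    ∃ v : N → ℂ, v ≠ 0 ∧ (Mᵀ.map Complex.ofReal) *ᵥ v = z • v := by
  rw [spectrum.mem_iff] at hz
  have hdet : (z • (1 : Matrix N N ℂ) - M.map Complex.ofReal).det = 0 := by
    by_contra hd
    exact hz (by
      rw [Algebra.algebraMap_eq_smul_one]
      exact (Matrix.isUnit_iff_isUnit_det _).mpr (isUnit_iff_ne_zero.mpr hd))
  have hdet' : (z • (1 : Matrix N N ℂ) - Mᵀ.map Complex.ofReal).det = 0 := by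
    have : (z • (1 : Matrix N N ℂ) - M.map Complex.ofReal)ᵀ
        = z • (1 : Matrix N N ℂ) - Mᵀ.map Complex.ofReal := by
      ext i j; simp [Matrix.transpose_apply, Matrix.one_apply, eq_comm]
    rw [← this, Matrix.det_transpose]; exact hdet
  obtain ⟨v, hv0, hveq⟩ := (Matrix.exists_mulVec_eq_zero_iff).mpr hdet'
  refine ⟨v, hv0, ?_⟩
  rw [Matrix.sub_mulVec] at hveq
  have h1 : (z • (1 : Matrix N N ℂ)) *ᵥ v = z • v := by
    rw [Matrix.smul_mulVec, Matrix.one_mulVec]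
  rw [h1] at hveq
  exact (sub_eq_zero.mp hveq).symm

end SpecLQR
private lemma eig_bound {N K' : Type*} [Fintype N] [DecidableEq N] [Fintype K']
    {M Q₂ : Matrix N N ℝ} {C : Matrix N K' ℝ}
    (hQ₂ : Q₂.PosSemidef)
    (hW : (Q₂ - C * Cᵀ - M * Q₂ * Mᵀ).PosSemidef)
    (hker : ∀ v : N → ℂ, (Cᵀ.map Complex.ofReal) *ᵥ v = 0 → (Mᵀ.map Complex.ofReal) *ᵥ v = 0)
    {z : ℂ} (hz : z ∈ spectrum ℂ (M.map Complex.ofReal)) : ‖z‖ < 1 := by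
  by_contra hle
  push_neg at hle
  have hns : (1 : ℝ) ≤ Complex.normSq z := by
    rw [← Complex.sq_norm]; nlinarith
  have hz0 : z ≠ 0 := fun h => by simp [h] at hns; linarith
  obtain ⟨v, hv0, hveq⟩ := eig_vec hz
  set a : ℝ := (star v ⬝ᵥ ((Q₂.map Complex.ofReal) *ᵥ v)).re with ha
  set t : ℝ := (star v ⬝ᵥ (((C * Cᵀ).map Complex.ofReal) *ᵥ v)).re with ht
  have ha0 : 0 ≤ a := psd_cre hQ₂ v
  have hCC : (C * Cᵀ).PosSemidef := by
    have := Matrix.posSemidef_self_mul_conjTranspose C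
    rwa [Matrix.conjTranspose_eq_transpose_of_trivial] at this
  have ht0 : 0 ≤ t := psd_cre hCC v
  -- the M Q₂ Mᵀ term
  have hm : (star v ⬝ᵥ (((M * Q₂ * Mᵀ).map Complex.ofReal) *ᵥ v)).re = Complex.normSq z * a := by
    rw [cmap_mul, cmap_mul]
    have h1 : (M.map Complex.ofReal * Q₂.map Complex.ofReal * Mᵀ.map Complex.ofReal) *ᵥ v
        = M.map Complex.ofReal *ᵥ (Q₂.map Complex.ofReal *ᵥ (z • v)) := by
      rw [← hveq, Matrix.mulVec_mulVec, Matrix.mulVec_mulVec]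
    rw [h1, dot_shift, hveq]
    rw [Matrix.mulVec_smul, star_smul, smul_dotProduct, dotProduct_smul]
    rw [smul_smul, smul_eq_mul]
    rw [show star z * z = (Complex.normSq z : ℂ) by
      rw [Complex.star_def, mul_comm, Complex.mul_conj]]
    exact Complex.re_ofReal_mul _ _
  have hWre := psd_cre hW v
  rw [cmap_sub, cmap_sub, Matrix.sub_mulVec, Matrix.sub_mulVec,
    dotProduct_sub, dotProduct_sub, Complex.sub_re, Complex.sub_re,
    hm, ← ha, ← ht] at hWre
  have hteq : t = 0 := by nlinarith
  -- deduce Cᵀ v = 0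
  have hu : (Cᵀ.map Complex.ofReal) *ᵥ v = 0 := by
    apply dot_self_zero
    have h2 : (star v ⬝ᵥ ((C.map Complex.ofReal) *ᵥ ((Cᵀ.map Complex.ofReal) *ᵥ v))).re = t := by
      rw [ht, cmap_mul, ← Matrix.mulVec_mulVec]
    rw [dot_shift] at h2
    rw [h2, hteq]
  have := hker v hu
  rw [hveq] at this
  rcases smul_eq_zero.mp this with h | h
  · exact hz0 h
  · exact hv0 h

private lemma specRad_lt_one {N : Type*} [Fintype N] [DecidableEq N] {M : Matrix N N ℝ}
    (h : ∀ c ∈ spectrum ℂ (M.map Complex.ofReal), ‖c‖ < 1) : specRad M < 1 := by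
  rw [specRad]
  set s := (fun z => ‖z‖) '' spectrum ℂ (M.map Complex.ofReal) with hs
  have hfin : s.Finite := (Matrix.finite_spectrum _).image _
  rcases s.eq_empty_or_nonempty with he | hne
  · rw [he, Real.sSup_empty]; norm_num
  · obtain ⟨c, hc, hcs⟩ := hne.csSup_mem hfin
    rw [← hcs]
    exact h c hc
private lemma trace_psd_nonneg {N : Type*} [Fintype N] [DecidableEq N]
    {M : Matrix N N ℝ} (hM : M.PosSemidef) : 0 ≤ M.trace := by
  rw [Matrix.trace]
  refine Finset.sum_nonneg fun i _ => ?_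
  have := psd_dot hM (Pi.single i 1)
  simpa [Matrix.mulVec_single, single_dotProduct, Matrix.diag] using this

open scoped MatrixOrder in
private lemma trace_mul_psd_nonneg {N : Type*} [Fintype N] [DecidableEq N]
    {Λ D : Matrix N N ℝ} (hΛ : Λ.PosSemidef) (hD : D.PosSemidef) :
    0 ≤ (Λ * D).trace := by
  obtain ⟨Y, rfl⟩ := CStarAlgebra.nonneg_iff_eq_star_mul_self.mp hΛ.nonneg
  rw [Matrix.star_eq_conjTranspose, Matrix.mul_assoc, Matrix.trace_mul_comm]
  exact trace_psd_nonneg (hD.mul_mul_conjTranspose_same Y)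
/-- Data-driven LQR design: if the LMI with top-left block `−S·P·S + I` is feasible,
then `G` is invertible, `F = Xᵀ·(Gᵀ)⁻¹` is stabilizing, the cost series
`𝒥(F) = Σ_k trace(Λ·A_F^k·(A_Fᵀ)^k)` converges, and `𝒥(F) ≤ trace(Λ·S·P·S)`. -/
theorem data_driven_LQR_design {n m : ℕ}
    (A : Matrix (Fin n) (Fin n) ℝ) (B : Matrix (Fin n) (Fin m) ℝ)
    (Λ : Matrix (Fin n ⊕ Fin m) (Fin n ⊕ Fin m) ℝ) (hΛ : Λ.PosSemidef)
    (S : Matrix (Fin n ⊕ Fin m) (Fin n ⊕ Fin m) ℝ) (hS : S.PosDef)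
    (H : Matrix (Fin n ⊕ Fin m) (Fin n) ℝ)
    (hH : H = S * (Matrix.fromCols A B)ᵀ)
    (G : Matrix (Fin n) (Fin n) ℝ) (P : Matrix (Fin n ⊕ Fin m) (Fin n ⊕ Fin m) ℝ)
    (X : Matrix (Fin n) (Fin m) ℝ) (hP : P.IsSymm)
    (hLMI : (-(Matrix.fromBlocks (-(S * P * S) + 1) (Matrix.fromCols G X)ᵀ
        (Matrix.fromCols G X) (Hᵀ * P * H - G - Gᵀ))).PosDef) :
    IsUnit G ∧
      specRad (A + B * (Xᵀ * (Gᵀ)⁻¹)) < 1 ∧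
      Summable (fun k : ℕ => Matrix.trace (Λ *
        ((Matrix.fromBlocks A B ((Xᵀ * (Gᵀ)⁻¹) * A) ((Xᵀ * (Gᵀ)⁻¹) * B)) ^ k *
          ((Matrix.fromBlocks A B ((Xᵀ * (Gᵀ)⁻¹) * A) ((Xᵀ * (Gᵀ)⁻¹) * B))ᵀ) ^ k))) ∧
      (∑' k : ℕ, Matrix.trace (Λ *
        ((Matrix.fromBlocks A B ((Xᵀ * (Gᵀ)⁻¹) * A) ((Xᵀ * (Gᵀ)⁻¹) * B)) ^ k *
          ((Matrix.fromBlocks A B ((Xᵀ * (Gᵀ)⁻¹) * A) ((Xᵀ * (Gᵀ)⁻¹) * B))ᵀ) ^ k))) ≤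
        Matrix.trace (Λ * (S * P * S)) := by
  classical
  have hSd : IsUnit S.det := isUnit_iff_ne_zero.mpr (ne_of_gt hS.det_pos)
  have hSt : Sᵀ = S := by
    rw [← Matrix.conjTranspose_eq_transpose_of_trivial]
    exact hS.1
  have hPt : Pᵀ = P := hP
  set F := Xᵀ * (Gᵀ)⁻¹ with hF
  set T := Matrix.fromCols A B with hT
  set Q := S * P * S with hQdef
  set K := Hᵀ * P * H with hKdef
  set AF := Matrix.fromBlocks A B (F * A) (F * B) with hAFdef
  -- the basic quadratic inequality from the LMI
  have hquad : ∀ (x : Fin n ⊕ Fin m → ℝ) (z : Fin n → ℝ), Sum.elim x z ≠ 0 →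
      0 < x ⬝ᵥ (Q *ᵥ x) - x ⬝ᵥ x - x ⬝ᵥ ((Matrix.fromCols G X)ᵀ *ᵥ z)
        - z ⬝ᵥ ((Matrix.fromCols G X) *ᵥ x)
        + z ⬝ᵥ (G *ᵥ z) + z ⬝ᵥ (Gᵀ *ᵥ z) - z ⬝ᵥ (K *ᵥ z) := by
    intro x z hne
    have h := pd_dot hLMI hne
    rw [Matrix.neg_mulVec, dotProduct_neg, Matrix.fromBlocks_mulVec,
      sumElim_dotProduct_sumElim] at h
    simp only [Sum.elim_comp_inl, Sum.elim_comp_inr, Matrix.add_mulVec, Matrix.sub_mulVec, Matrix.neg_mulVec, Matrix.one_mulVec,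
      dotProduct_add, dotProduct_sub, dotProduct_neg] at h
    linarith
  have helim1 : ∀ (x : Fin n ⊕ Fin m → ℝ) (z : Fin n → ℝ), x ≠ 0 →
      Sum.elim x z ≠ 0 :=
    fun x z hx h => hx (funext fun i => congrFun h (Sum.inl i))
  have helim2 : ∀ (x : Fin n ⊕ Fin m → ℝ) (z : Fin n → ℝ), z ≠ 0 →
      Sum.elim x z ≠ 0 :=
    fun x z hz h => hz (funext fun i => congrFun h (Sum.inr i))
  have hQ1 : ∀ x : Fin n ⊕ Fin m → ℝ, x ≠ 0 → 0 < x ⬝ᵥ (Q *ᵥ x) - x ⬝ᵥ x := by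
    intro x hx
    have := hquad x 0 (helim1 x 0 hx)
    simpa using this
  have hGG : ∀ z : Fin n → ℝ, z ≠ 0 →
      0 < z ⬝ᵥ (G *ᵥ z) + z ⬝ᵥ (Gᵀ *ᵥ z) - z ⬝ᵥ (K *ᵥ z) := by
    intro z hz
    have := hquad 0 z (helim2 0 z hz)
    simpa using this
  have hQt : Qᵀ = Q := by
    rw [hQdef, Matrix.transpose_mul, Matrix.transpose_mul, hSt, hPt, ← Matrix.mul_assoc]
  have hdotself : ∀ x : Fin n ⊕ Fin m → ℝ, 0 ≤ x ⬝ᵥ x := by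
    intro x
    have := psd_dot (Matrix.PosSemidef.one (n := Fin n ⊕ Fin m) (R := ℝ)) x
    rwa [Matrix.one_mulVec] at this
  have hQpd : Q.PosDef := real_posdef hQt (fun x hx => by
    have := hQ1 x hx; have h2 := hdotself x; linarith)
  have hPpsd : P.PosSemidef := by
    have h0 := hQpd.posSemidef.mul_mul_conjTranspose_same S⁻¹
    have h1 : S⁻¹ * Q * (S⁻¹)ᴴ = P := by
      rw [Matrix.conjTranspose_eq_transpose_of_trivial, Matrix.transpose_nonsing_inv, hSt,
        hQdef]
      calc S⁻¹ * (S * P * S) * S⁻¹ = S⁻¹ * S * P * (S * S⁻¹) := by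
            simp only [Matrix.mul_assoc]
        _ = P := by
            rw [Matrix.nonsing_inv_mul S hSd, Matrix.mul_nonsing_inv S hSd,
              Matrix.one_mul, Matrix.mul_one]
    rwa [h1] at h0
  have hKpsd : K.PosSemidef := by
    have := hPpsd.conjTranspose_mul_mul_same H
    rwa [Matrix.conjTranspose_eq_transpose_of_trivial] at this
  have hGunit : IsUnit G := by
    by_contra hng
    have hdet : G.det = 0 := by
      by_contra hd
      exact hng ((Matrix.isUnit_iff_isUnit_det G).mpr (isUnit_iff_ne_zero.mpr hd))
    obtain ⟨z, hz0, hzG⟩ := (Matrix.exists_mulVec_eq_zero_iff).mpr hdet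
    have h := hGG z hz0
    have h1 : z ⬝ᵥ (G *ᵥ z) = 0 := by rw [hzG, dotProduct_zero]
    have h2 : z ⬝ᵥ (Gᵀ *ᵥ z) = 0 := by
      rw [Matrix.mulVec_transpose, dotProduct_comm, ← Matrix.dotProduct_mulVec, h1]
    have h3 := psd_dot hKpsd z
    linarith
  have hGdet : IsUnit G.det := (Matrix.isUnit_iff_isUnit_det G).mp hGunit
  have hGFt : G * Fᵀ = X := by
    have h1 : Fᵀ = G⁻¹ * X := by
      rw [hF, Matrix.transpose_mul, Matrix.transpose_transpose,
        Matrix.transpose_nonsing_inv, Matrix.transpose_transpose]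
    rw [h1, ← Matrix.mul_assoc, Matrix.mul_nonsing_inv G hGdet, Matrix.one_mul]
  set L := Matrix.fromRows (1 : Matrix (Fin n) (Fin n) ℝ) F with hL
  have hGL : Matrix.fromCols G X = G * Lᵀ := by
    rw [hL, Matrix.transpose_fromRows, Matrix.transpose_one, Matrix.mul_fromCols,
      Matrix.mul_one, hGFt]
  have hAF : AF = L * T := by
    rw [hAFdef, hL, hT, Matrix.fromRows_mul_fromCols, Matrix.one_mul, Matrix.one_mul]
  have hHt2 : Hᵀ = T * S := by
    rw [hH, Matrix.transpose_mul, Matrix.transpose_transpose, hSt]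
  have hAFQ : AF * Q * AFᵀ = L * K * Lᵀ := by
    rw [hAF, hKdef, hHt2, hH, hQdef]
    simp only [Matrix.transpose_mul, Matrix.mul_assoc]
  set R := Q - 1 - AF * Q * AFᵀ with hRdef
  have hRt : Rᵀ = R := by
    rw [hRdef]
    simp only [Matrix.transpose_sub, Matrix.transpose_mul, Matrix.transpose_transpose,
      Matrix.transpose_one, hQt, Matrix.mul_assoc]
  have hRpd : R.PosDef := by
    refine real_posdef hRt (fun x hx => ?_)
    set z := Lᵀ *ᵥ x with hz
    have h := hquad x z (helim1 x z hx)
    have e1 : x ⬝ᵥ ((Matrix.fromCols G X)ᵀ *ᵥ z) = z ⬝ᵥ (Gᵀ *ᵥ z) := by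
      rw [hGL, Matrix.transpose_mul, Matrix.transpose_transpose, ← Matrix.mulVec_mulVec,
        Matrix.dotProduct_mulVec, ← Matrix.mulVec_transpose, ← hz]
    have e2 : z ⬝ᵥ ((Matrix.fromCols G X) *ᵥ x) = z ⬝ᵥ (G *ᵥ z) := by
      rw [hGL, ← Matrix.mulVec_mulVec, ← hz]
    have e3 : x ⬝ᵥ ((AF * Q * AFᵀ) *ᵥ x) = z ⬝ᵥ (K *ᵥ z) := by
      rw [hAFQ]
      rw [show (L * K * Lᵀ) *ᵥ x = L *ᵥ (K *ᵥ z) by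
        rw [hz, Matrix.mulVec_mulVec, Matrix.mulVec_mulVec]]
      rw [Matrix.dotProduct_mulVec, ← Matrix.mulVec_transpose, ← hz]
    rw [e1, e2] at h
    rw [hRdef, Matrix.sub_mulVec, Matrix.sub_mulVec, Matrix.one_mulVec,
      dotProduct_sub, dotProduct_sub, e3]
    linarith
  -- stability
  have hM0 : T * L = A + B * F := by
    rw [hT, hL, Matrix.fromCols_mul_fromRows, Matrix.mul_one]
  have hQ2psd : (T * Q * Tᵀ).PosSemidef := by
    have := hQpd.posSemidef.mul_mul_conjTranspose_same T
    rwa [Matrix.conjTranspose_eq_transpose_of_trivial] at this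
  have hW : ((T * Q * Tᵀ) - T * Tᵀ - (A + B * F) * (T * Q * Tᵀ) * (A + B * F)ᵀ).PosSemidef := by
    have h1 : T * R * Tᵀ
        = (T * Q * Tᵀ) - T * Tᵀ - (A + B * F) * (T * Q * Tᵀ) * (A + B * F)ᵀ := by
      rw [← hM0, hRdef, hAF]
      simp only [Matrix.mul_sub, Matrix.sub_mul, Matrix.mul_one, Matrix.one_mul,
        Matrix.transpose_mul, Matrix.mul_assoc]
    rw [← h1]
    have := hRpd.posSemidef.mul_mul_conjTranspose_same T
    rwa [Matrix.conjTranspose_eq_transpose_of_trivial] at this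
  have hker : ∀ v : Fin n → ℂ, (Tᵀ.map Complex.ofReal) *ᵥ v = 0 →
      ((A + B * F)ᵀ.map Complex.ofReal) *ᵥ v = 0 := by
    intro v hv
    rw [← hM0, Matrix.transpose_mul, cmap_mul, ← Matrix.mulVec_mulVec, hv,
      Matrix.mulVec_zero]
  have hspec : specRad (A + B * F) < 1 :=
    specRad_lt_one (fun c hc => eig_bound hQ2psd hW hker hc)
  -- cost
  have htnn : ∀ k : ℕ, 0 ≤ Matrix.trace (Λ * (AF ^ k * (AF ^ k)ᵀ)) := by
    intro k
    have hpsd : (AF ^ k * (AF ^ k)ᵀ).PosSemidef := by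
      have := Matrix.posSemidef_self_mul_conjTranspose (AF ^ k)
      rwa [Matrix.conjTranspose_eq_transpose_of_trivial] at this
    exact trace_mul_psd_nonneg hΛ hpsd
  have htel : ∀ N' : ℕ,
      (Q - (∑ k ∈ Finset.range N', AF ^ k * (AF ^ k)ᵀ)
        - AF ^ N' * Q * (AF ^ N')ᵀ).PosSemidef := by
    intro N'
    induction N' with
    | zero =>
      simp only [Finset.range_zero, Finset.sum_empty, pow_zero, Matrix.transpose_one,
        Matrix.one_mul, Matrix.mul_one, sub_zero, sub_self]
      exact Matrix.PosSemidef.zero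
    | succ N' ih =>
      have hstep : Q - (∑ k ∈ Finset.range (N' + 1), AF ^ k * (AF ^ k)ᵀ)
          - AF ^ (N' + 1) * Q * (AF ^ (N' + 1))ᵀ
          = (Q - (∑ k ∈ Finset.range N', AF ^ k * (AF ^ k)ᵀ)
              - AF ^ N' * Q * (AF ^ N')ᵀ)
            + AF ^ N' * R * (AF ^ N')ᵀ := by
        rw [Finset.sum_range_succ, hRdef, pow_succ]
        simp only [Matrix.transpose_mul, Matrix.mul_sub, Matrix.sub_mul, Matrix.mul_one,
          Matrix.one_mul, Matrix.mul_assoc]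
        abel
      rw [hstep]
      refine ih.add ?_
      have := hRpd.posSemidef.mul_mul_conjTranspose_same (AF ^ N')
      rwa [Matrix.conjTranspose_eq_transpose_of_trivial] at this
  have hQsum : ∀ N' : ℕ,
      (Q - ∑ k ∈ Finset.range N', AF ^ k * (AF ^ k)ᵀ).PosSemidef := by
    intro N'
    have h3 : (AF ^ N' * Q * (AF ^ N')ᵀ).PosSemidef := by
      have := hQpd.posSemidef.mul_mul_conjTranspose_same (AF ^ N')
      rwa [Matrix.conjTranspose_eq_transpose_of_trivial] at this
    have := (htel N').add h3
    rwa [sub_add_cancel] at this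
  have hpartial : ∀ N' : ℕ,
      ∑ k ∈ Finset.range N', Matrix.trace (Λ * (AF ^ k * (AF ^ k)ᵀ))
        ≤ Matrix.trace (Λ * Q) := by
    intro N'
    have h1 : ∑ k ∈ Finset.range N', Matrix.trace (Λ * (AF ^ k * (AF ^ k)ᵀ))
        = Matrix.trace (Λ * ∑ k ∈ Finset.range N', AF ^ k * (AF ^ k)ᵀ) := by
      rw [Finset.mul_sum, Matrix.trace_sum]
    have h2 := trace_mul_psd_nonneg hΛ (hQsum N')
    rw [Matrix.mul_sub, Matrix.trace_sub] at h2
    linarith [h1]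
  refine ⟨hGunit, hspec, ?_, ?_⟩
  · simp only [← Matrix.transpose_pow]
    exact summable_of_sum_range_le htnn hpartial
  · simp only [← Matrix.transpose_pow]
    exact Real.tsum_le_of_sum_range_le htnn hpartial
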